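/- Assume Assumption A holds, that μ(ω) > 0 for every ω ∈ Ω (write μ_min = min_ω μ(ω)), and that 0 ≤ γ with γ/(μ_min·Δ) < 1. Then for every finite nonempty signal set S, every signaling scheme π on S, and every γ-best-responding receiver strategy ρ, the sender's expected utility satisfies U_μ(π,ρ) ≤ OPT^BP(μ) + γ/(μ_min·Δ). -/
import Mathlib


open Finset
open scoped BigOperators Classical

noncomputable section

/-- `p` is a family of probability distributions on the finite set `β`, indexed by `α`. -/
def IsDist {α β : Type*} [Fintype β] (p : α → β → ℝ) : Prop :=
  (∀ x y, 0 ≤ p x y) ∧ ∀ x, ∑ y, p x y = 1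

/-- `p` is a probability distribution on the finite set `β`. -/
def IsProb {β : Type*} [Fintype β] (p : β → ℝ) : Prop :=
  (∀ y, 0 ≤ p y) ∧ ∑ y, p y = 1

/-- The marginal probability `π(s)` of signal `s` under prior `μ` and signaling scheme `π`. -/
def marg {Ω S : Type*} [Fintype Ω] (μ : Ω → ℝ) (π : Ω → S → ℝ) (s : S) : ℝ :=
  ∑ ω, μ ω * π ω s

/-- The posterior probability `π(ω|s)` of state `ω` given signal `s`. -/
def post {Ω S : Type*} [Fintype Ω] (μ : Ω → ℝ) (π : Ω → S → ℝ) (ω : Ω) (s : S) : ℝ :=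
  μ ω * π ω s / marg μ π s

/-- The receiver's expected utility `v(a, μ_s)` of action `a` under the posterior of signal `s`. -/
def vPost {Ω S A : Type*} [Fintype Ω] (μ : Ω → ℝ) (π : Ω → S → ℝ)
    (v : A → Ω → ℝ) (a : A) (s : S) : ℝ :=
  ∑ ω, post μ π ω s * v a ω

/-- Action `a` is `γ`-best-responding to signal `s`. -/
def IsBR {Ω S A : Type*} [Fintype Ω] [Fintype A] (μ : Ω → ℝ) (π : Ω → S → ℝ)
    (v : A → Ω → ℝ) (γ : ℝ) (a : A) (s : S) : Prop :=
  ∀ a' : A, vPost μ π v a' s - γ ≤ vPost μ π v a s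

/-- `ρ` is a `γ`-best-responding receiver strategy: on every signal that is sent with positive
probability, it puts probability `1` on `γ`-best-responding actions (equivalently, probability `0`
on every action that is not `γ`-best-responding). -/
def IsBRStrategy {Ω S A : Type*} [Fintype Ω] [Fintype A] (μ : Ω → ℝ) (π : Ω → S → ℝ)
    (v : A → Ω → ℝ) (γ : ℝ) (ρ : S → A → ℝ) : Prop :=
  ∀ s, 0 < marg μ π s → ∀ a, ¬ IsBR μ π v γ a s → ρ s a = 0

/-- `ρ` is a `(γ, δ)`-best-responding receiver strategy: on every signal that is sent with
positive probability, it puts probability at least `1 - δ` on `γ`-best-responding actions. -/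
def IsApproxBRStrategy {Ω S A : Type*} [Fintype Ω] [Fintype A] (μ : Ω → ℝ) (π : Ω → S → ℝ)
    (v : A → Ω → ℝ) (γ δ : ℝ) (ρ : S → A → ℝ) : Prop :=
  ∀ s, 0 < marg μ π s →
    1 - δ ≤ ∑ a ∈ Finset.univ.filter (fun a => IsBR μ π v γ a s), ρ s a

/-- The sender's expected utility `U_μ(π, ρ)`. -/
def senderU {Ω S A : Type*} [Fintype Ω] [Fintype S] [Fintype A] (μ : Ω → ℝ) (π : Ω → S → ℝ)
    (u : A → Ω → ℝ) (ρ : S → A → ℝ) : ℝ :=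
  ∑ ω, ∑ s, μ ω * π ω s * ∑ a, ρ s a * u a ω

/-- The obedient strategy for a direct-revelation scheme: take the recommended action. -/
def obedient {A : Type*} : A → A → ℝ := fun s a => if a = s then 1 else 0

/-- `OPT^BP(μ)`: the supremum of the sender's expected utility over direct-revelation schemes
(signal set `S = A`) and best-responding (`0`-best-responding) receiver strategies. -/
def OPTBP {Ω A : Type*} [Fintype Ω] [Fintype A] (μ : Ω → ℝ) (v u : A → Ω → ℝ) : ℝ :=
  sSup {x | ∃ (π : Ω → A → ℝ) (ρ : A → A → ℝ), IsDist π ∧ IsDist ρ ∧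
    IsBRStrategy μ π v 0 ρ ∧ x = senderU μ π u ρ}

/-- The `α`-robustification of a direct-revelation scheme `π`, where `aOf ω` is the receiver's
unique optimal action at state `ω`. -/
def robustify {Ω A : Type*} (π : Ω → A → ℝ) (aOf : Ω → A) (α : ℝ) : Ω → A → ℝ :=
  fun ω s => (1 - α) * π ω s + if s = aOf ω then α else 0

/-- `μ(Ω_a)`: the prior mass of the set of states whose unique optimal action is `a`. -/
def massOf {Ω A : Type*} [Fintype Ω] (μ : Ω → ℝ) (aOf : Ω → A) (a : A) : ℝ :=
  ∑ ω ∈ Finset.univ.filter (fun ω => aOf ω = a), μ ω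

/-- `μ_min = min_ω μ(ω)`. -/
def minPrior {Ω : Type*} [Fintype Ω] [Nonempty Ω] (μ : Ω → ℝ) : ℝ :=
  Finset.univ.inf' Finset.univ_nonempty μ

/-- The advantage term of recommendation `s` against deviation `a` in a direct-revelation
scheme `π`: the advantage `adv_π(s)` is the minimum of this quantity over `a ≠ s`. -/
def advTerm {Ω A : Type*} [Fintype Ω] (μ : Ω → ℝ) (π : Ω → A → ℝ) (v : A → Ω → ℝ)
    (s a : A) : ℝ :=
  ∑ ω, post μ π ω s * (v s ω - v a ω)


lemma senderU_le_one' {Ω S A : Type*} [Fintype Ω] [Fintype S] [Fintype A]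
    (μ : Ω → ℝ) (hμ : IsProb μ) (π : Ω → S → ℝ) (hπ : IsDist π)
    (u : A → Ω → ℝ) (hu : ∀ a ω, 0 ≤ u a ω ∧ u a ω ≤ 1)
    (ρ : S → A → ℝ) (hρ : IsDist ρ) :
    senderU μ π u ρ ≤ 1 := by
  have h1 : senderU μ π u ρ ≤ ∑ ω, ∑ s, μ ω * π ω s := by
    apply Finset.sum_le_sum; intro ω _
    apply Finset.sum_le_sum; intro s _
    have hinner : ∑ a, ρ s a * u a ω ≤ 1 := by
      calc ∑ a, ρ s a * u a ω ≤ ∑ a, ρ s a := by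
            apply Finset.sum_le_sum; intro a _
            nlinarith [hρ.1 s a, (hu a ω).1, (hu a ω).2]
        _ = 1 := hρ.2 s
    have hnn : 0 ≤ μ ω * π ω s := mul_nonneg (hμ.1 ω) (hπ.1 ω s)
    calc μ ω * π ω s * ∑ a, ρ s a * u a ω ≤ μ ω * π ω s * 1 :=
          mul_le_mul_of_nonneg_left hinner hnn
      _ = μ ω * π ω s := mul_one _
  have h2 : ∑ ω, ∑ s, μ ω * π ω s = 1 := by
    have h3 : ∀ ω : Ω, ∑ s : S, μ ω * π ω s = μ ω := by
      intro ω; rw [← Finset.mul_sum, hπ.2 ω, mul_one]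
    rw [Finset.sum_congr rfl (fun ω _ => h3 ω), hμ.2]
  linarith

lemma vPost_sub_eq {Ω S A : Type*} [Fintype Ω] (μ : Ω → ℝ) (π : Ω → S → ℝ)
    (v : A → Ω → ℝ) (a a' : A) (s : S) :
    vPost μ π v a s - vPost μ π v a' s
      = (∑ ω, μ ω * π ω s * (v a ω - v a' ω)) / marg μ π s := by
  unfold vPost post
  rw [← Finset.sum_sub_distrib, Finset.sum_div]
  apply Finset.sum_congr rfl
  intro ω _
  rw [div_mul_eq_mul_div, div_mul_eq_mul_div, div_sub_div_same, ← mul_sub]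

/-- Lemma 2.5, upper bound: under Assumption A, with `μ_min > 0` and
`γ/(μ_min·Δ) < 1`, every signaling scheme on every finite nonempty signal set gives the sender
at most `OPT^BP(μ) + γ/(μ_min·Δ)` against every `γ`-best-responding strategy. -/
theorem bp_upper_bound
    {Ω A : Type*} (S : Type*) [Fintype Ω] [Fintype A] [Fintype S]
    [Nonempty Ω] [Nonempty A] [Nonempty S]
    (μ : Ω → ℝ) (hμ : IsProb μ) (hμpos : ∀ ω, 0 < μ ω)
    (v : A → Ω → ℝ) (hv : ∀ a ω, 0 ≤ v a ω ∧ v a ω ≤ 1)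
    (u : A → Ω → ℝ) (hu : ∀ a ω, 0 ≤ u a ω ∧ u a ω ≤ 1)
    -- Assumption A
    (aOf : Ω → A) (hBest : ∀ ω a, a ≠ aOf ω → v a ω < v (aOf ω) ω)
    (Δ : ℝ) (hΔpos : 0 < Δ) (hΔ : ∀ ω a, a ≠ aOf ω → Δ ≤ v (aOf ω) ω - v a ω)
    (hOnto : ∀ a, ∃ ω, aOf ω = a)
    (γ : ℝ) (hγ : 0 ≤ γ) (hγ1 : γ / (minPrior μ * Δ) < 1)
    (π : Ω → S → ℝ) (hπ : IsDist π)
    (ρ : S → A → ℝ) (hρ : IsDist ρ) (hρBR : IsBRStrategy μ π v γ ρ) :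
    senderU μ π u ρ ≤ OPTBP μ v u + γ / (minPrior μ * Δ) := by
  classical
  -- Notation
  set mp := minPrior μ with hmpdef
  have hmp_le : ∀ ω, mp ≤ μ ω := fun ω => Finset.inf'_le μ (Finset.mem_univ ω)
  have hmp_pos : 0 < mp := by
    obtain ⟨ω₀, hω₀⟩ := Finset.exists_mem_eq_inf' (Finset.univ_nonempty (α := Ω)) μ
    rw [hmpdef, minPrior, hω₀.2]; exact hμpos ω₀
  set ε := γ / (mp * Δ) with hεdef
  have hmd_pos : 0 < mp * Δ := mul_pos hmp_pos hΔpos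
  have hε0 : 0 ≤ ε := div_nonneg hγ (le_of_lt hmd_pos)
  have hε1 : ε < 1 := hγ1
  have hεγ : ε * (mp * Δ) = γ := div_mul_cancel₀ γ (ne_of_gt hmd_pos)
  -- Composed direct scheme and its robustification
  set π₁ : Ω → A → ℝ := fun ω a => ∑ s, π ω s * ρ s a with hπ₁def
  set π₂ : Ω → A → ℝ := robustify π₁ aOf ε with hπ₂def
  have hπ₁dist : IsDist π₁ := by
    constructor
    · intro ω a
      exact Finset.sum_nonneg fun s _ => mul_nonneg (hπ.1 ω s) (hρ.1 s a)
    · intro ω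
      rw [Finset.sum_comm]
      calc ∑ s, ∑ a, π ω s * ρ s a = ∑ s : S, π ω s := by
            apply Finset.sum_congr rfl; intro s _
            rw [← Finset.mul_sum, hρ.2 s, mul_one]
        _ = 1 := hπ.2 ω
  have hπ₂dist : IsDist π₂ := by
    constructor
    · intro ω a
      have h1 : 0 ≤ (1 - ε) * π₁ ω a := mul_nonneg (by linarith) (hπ₁dist.1 ω a)
      have h2 : (0:ℝ) ≤ if a = aOf ω then ε else 0 := by positivity
      simpa [hπ₂def, robustify] using add_nonneg h1 h2
    · intro ω
      simp only [hπ₂def, robustify]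
      rw [Finset.sum_add_distrib, ← Finset.mul_sum, hπ₁dist.2 ω]
      simp
  have hobdist : IsDist (obedient : A → A → ℝ) := by
    constructor
    · intro s a; simp only [obedient]; positivity
    · intro s; simp [obedient]
  -- marginal sums to one
  have hmargsum : ∑ s : S, marg μ π s = 1 := by
    unfold marg
    rw [Finset.sum_comm]
    calc ∑ ω, ∑ s : S, μ ω * π ω s = ∑ ω, μ ω := by
          apply Finset.sum_congr rfl; intro ω _
          rw [← Finset.mul_sum, hπ.2 ω, mul_one]
      _ = 1 := hμ.2
  have hmargnn : ∀ s, 0 ≤ marg μ π s :=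
    fun s => Finset.sum_nonneg fun ω _ => mul_nonneg (le_of_lt (hμpos ω)) (hπ.1 ω s)
  -- key lower bound from γ-best-responding
  have key : ∀ s, 0 < marg μ π s → ∀ a, 0 < ρ s a → ∀ a',
      -(γ * marg μ π s) ≤ ∑ ω, μ ω * π ω s * (v a ω - v a' ω) := by
    intro s hm a hρa a'
    have hBR : IsBR μ π v γ a s := by
      by_contra h
      exact absurd (hρBR s hm a h) (ne_of_gt hρa)
    have h := hBR a'
    have h2 := vPost_sub_eq μ π v a a' s
    have h3 : -γ ≤ (∑ ω, μ ω * π ω s * (v a ω - v a' ω)) / marg μ π s := by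
      rw [← h2]; linarith
    have h4 := (le_div_iff₀ hm).mp h3
    linarith
  -- nonnegativity of the unnormalized advantage of π₂
  have hD : ∀ a a' : A, 0 ≤ ∑ ω, μ ω * π₂ ω a * (v a ω - v a' ω) := by
    intro a a'
    by_cases hne : a' = a
    · subst hne; simp
    -- split the sum
    have hsplit : ∑ ω, μ ω * π₂ ω a * (v a ω - v a' ω)
        = (1 - ε) * (∑ ω, μ ω * π₁ ω a * (v a ω - v a' ω))
          + ε * ∑ ω ∈ Finset.univ.filter (fun ω => a = aOf ω),
              μ ω * (v a ω - v a' ω) := by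
      simp only [hπ₂def, robustify]
      rw [Finset.sum_filter, Finset.mul_sum, Finset.mul_sum, ← Finset.sum_add_distrib]
      apply Finset.sum_congr rfl
      intro ω _
      by_cases h : a = aOf ω <;> simp [h] <;> ring
    -- term 1 bound
    have hT1 : -γ ≤ ∑ ω, μ ω * π₁ ω a * (v a ω - v a' ω) := by
      have hrw : ∑ ω, μ ω * π₁ ω a * (v a ω - v a' ω)
          = ∑ s, ∑ ω, μ ω * π ω s * ρ s a * (v a ω - v a' ω) := by
        rw [Finset.sum_comm]
        apply Finset.sum_congr rfl
        intro ω _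
        simp only [hπ₁def]
        rw [Finset.mul_sum, Finset.sum_mul]
        apply Finset.sum_congr rfl
        intro s _; ring
      have hterm : ∀ s : S, -(γ * (marg μ π s * ρ s a))
          ≤ ∑ ω, μ ω * π ω s * ρ s a * (v a ω - v a' ω) := by
        intro s
        rcases (hmargnn s).lt_or_eq with hm | hm
        · rcases (hρ.1 s a).lt_or_eq with hr | hr
          · have hk := key s hm a hr a'
            have := mul_le_mul_of_nonneg_right hk (le_of_lt hr)
            calc -(γ * (marg μ π s * ρ s a))
                = -(γ * marg μ π s) * ρ s a := by ring
              _ ≤ (∑ ω, μ ω * π ω s * (v a ω - v a' ω)) * ρ s a := this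
              _ = ∑ ω, μ ω * π ω s * ρ s a * (v a ω - v a' ω) := by
                  rw [Finset.sum_mul]
                  apply Finset.sum_congr rfl
                  intro ω _; ring
          · rw [← hr]; simp
        · have hz : ∀ ω, μ ω * π ω s = 0 := by
            have := (Finset.sum_eq_zero_iff_of_nonneg
              (fun ω _ => mul_nonneg (le_of_lt (hμpos ω)) (hπ.1 ω s))).mp hm.symm
            intro ω; exact this ω (Finset.mem_univ ω)
          rw [← hm]
          simp only [mul_zero, zero_mul, neg_zero]
          apply le_of_eq
          symm
          apply Finset.sum_eq_zero
          intro ω _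
          rw [hz ω]; ring
      have hsum := Finset.sum_le_sum (fun s (_ : s ∈ Finset.univ) => hterm s)
      have hsum2 : ∑ s : S, -(γ * (marg μ π s * ρ s a))
          = -(γ * ∑ s, marg μ π s * ρ s a) := by
        rw [Finset.mul_sum, ← Finset.sum_neg_distrib]
      have hsum3 : ∑ s, marg μ π s * ρ s a ≤ 1 := by
        calc ∑ s, marg μ π s * ρ s a ≤ ∑ s, marg μ π s := by
              apply Finset.sum_le_sum
              intro s _
              have hle1 : ρ s a ≤ 1 := by
                have := Finset.single_le_sum (f := ρ s)
                  (fun b _ => hρ.1 s b) (Finset.mem_univ a)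
                rw [hρ.2 s] at this; exact this
              nlinarith [hmargnn s, hρ.1 s a]
          _ = 1 := hmargsum
      have : -γ ≤ -(γ * ∑ s, marg μ π s * ρ s a) := by nlinarith
      rw [hrw]
      calc -γ ≤ -(γ * ∑ s, marg μ π s * ρ s a) := this
        _ = ∑ s : S, -(γ * (marg μ π s * ρ s a)) := hsum2.symm
        _ ≤ _ := hsum
    -- term 2 bound
    have hT2 : mp * Δ ≤ ∑ ω ∈ Finset.univ.filter (fun ω => a = aOf ω),
        μ ω * (v a ω - v a' ω) := by
      obtain ⟨ω₀, hω₀⟩ := hOnto a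
      have hmem : ω₀ ∈ Finset.univ.filter (fun ω => a = aOf ω) := by
        simp [hω₀]
      have hsingle : μ ω₀ * (v a ω₀ - v a' ω₀)
          ≤ ∑ ω ∈ Finset.univ.filter (fun ω => a = aOf ω),
              μ ω * (v a ω - v a' ω) := by
        apply Finset.single_le_sum _ hmem
        intro ω hω
        rw [Finset.mem_filter] at hω
        have ha : a = aOf ω := hω.2
        have hΔω : Δ ≤ v a ω - v a' ω := by
          have := hΔ ω a' (by rw [← ha]; exact hne)
          rw [← ha] at this; exact this
        nlinarith [le_of_lt (hμpos ω)]
      have hΔ₀ : Δ ≤ v a ω₀ - v a' ω₀ := by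
        have := hΔ ω₀ a' (by rw [hω₀]; exact hne)
        rw [hω₀] at this; exact this
      nlinarith [hmp_le ω₀, le_of_lt (hμpos ω₀)]
    rw [hsplit]
    nlinarith [mul_le_mul_of_nonneg_left hT2 hε0]
  -- obedience is exactly best-responding under π₂
  have hBRob : IsBRStrategy μ π₂ v 0 (obedient : A → A → ℝ) := by
    intro s hm b hnot
    by_contra hne
    have hbs : b = s := by
      by_contra hbs
      exact hne (by simp [obedient, hbs])
    subst hbs
    apply hnot
    intro a'
    have h2 := vPost_sub_eq μ π₂ v b a' b
    have h3 : 0 ≤ (∑ ω, μ ω * π₂ ω b * (v b ω - v a' ω)) / marg μ π₂ b :=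
      div_nonneg (hD b a') (le_of_lt hm)
    linarith
  -- sender utility identity
  have hUid : senderU μ π₂ u (obedient : A → A → ℝ)
      = (1 - ε) * senderU μ π u ρ + ε * ∑ ω, μ ω * u (aOf ω) ω := by
    have hob : ∀ (a : A) (ω : Ω), ∑ b, obedient a b * u b ω = u a ω := by
      intro a ω
      simp [obedient]
    calc senderU μ π₂ u (obedient : A → A → ℝ)
        = ∑ ω, ∑ a, μ ω * π₂ ω a * u a ω := by
          unfold senderU
          apply Finset.sum_congr rfl; intro ω _
          apply Finset.sum_congr rfl; intro a _
          rw [hob a ω]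
      _ = ∑ ω, ((1 - ε) * ∑ a, μ ω * π₁ ω a * u a ω
            + ε * (μ ω * u (aOf ω) ω)) := by
          apply Finset.sum_congr rfl; intro ω _
          simp only [hπ₂def, robustify]
          rw [Finset.mul_sum]
          have : ∑ a, μ ω * ((1 - ε) * π₁ ω a + if a = aOf ω then ε else 0) * u a ω
              = ∑ a, ((1 - ε) * (μ ω * π₁ ω a * u a ω)
                  + (if a = aOf ω then ε * (μ ω * u a ω) else 0)) := by
            apply Finset.sum_congr rfl; intro a _
            by_cases h : a = aOf ω <;> simp [h] <;> ring
          rw [this, Finset.sum_add_distrib, Finset.sum_ite_eq' Finset.univ (aOf ω)]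
          simp [mul_comm]
      _ = (1 - ε) * (∑ ω, ∑ a, μ ω * π₁ ω a * u a ω)
            + ε * ∑ ω, μ ω * u (aOf ω) ω := by
          rw [Finset.sum_add_distrib, ← Finset.mul_sum, ← Finset.mul_sum]
      _ = (1 - ε) * senderU μ π u ρ + ε * ∑ ω, μ ω * u (aOf ω) ω := by
          congr 1
          congr 1
          unfold senderU
          apply Finset.sum_congr rfl; intro ω _
          simp only [hπ₁def, Finset.mul_sum, Finset.sum_mul]
          rw [Finset.sum_comm]
          apply Finset.sum_congr rfl; intro s _
          apply Finset.sum_congr rfl; intro a _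
          ring
  -- π₂ with obedience is feasible for OPT^BP
  have hmem : senderU μ π₂ u (obedient : A → A → ℝ)
      ∈ {x | ∃ (π' : Ω → A → ℝ) (ρ' : A → A → ℝ), IsDist π' ∧ IsDist ρ' ∧
          IsBRStrategy μ π' v 0 ρ' ∧ x = senderU μ π' u ρ'} :=
    ⟨π₂, obedient, hπ₂dist, hobdist, hBRob, rfl⟩
  have hbdd : BddAbove {x | ∃ (π' : Ω → A → ℝ) (ρ' : A → A → ℝ), IsDist π' ∧ IsDist ρ' ∧
      IsBRStrategy μ π' v 0 ρ' ∧ x = senderU μ π' u ρ'} := by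
    refine ⟨1, ?_⟩
    rintro x ⟨π', ρ', hπ', hρ', -, rfl⟩
    exact senderU_le_one' μ hμ π' hπ' u hu ρ' hρ'
  have hle : senderU μ π₂ u (obedient : A → A → ℝ) ≤ OPTBP μ v u :=
    le_csSup hbdd hmem
  -- putting it together
  have hU1 : senderU μ π u ρ ≤ 1 := senderU_le_one' μ hμ π hπ u hu ρ hρ
  have hQ : 0 ≤ ∑ ω, μ ω * u (aOf ω) ω :=
    Finset.sum_nonneg fun ω _ => mul_nonneg (le_of_lt (hμpos ω)) (hu (aOf ω) ω).1
  have hfinal : senderU μ π u ρ - ε ≤ senderU μ π₂ u (obedient : A → A → ℝ) := by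
    rw [hUid]; nlinarith
  calc senderU μ π u ρ ≤ senderU μ π₂ u (obedient : A → A → ℝ) + ε := by linarith
    _ ≤ OPTBP μ v u + ε := by linarith
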